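/- Let E be an uncountable Polish space, ℓ ∈ ℕ, and E† = ⋃_{i<ℓ} W_i where each W_i is an open symmetric subset of E†. Then there exists a perfect (Cantor) set T ⊆ E and an i < ℓ such that T is W_i-connected, i.e. T† ⊆ W_i. -/

import Mathlib

open Set Filter Function Metric CantorScheme PiNat Topology

section Aux

variable {α : Type*}

/-- Two distinct points of a perfect set inside any open set meeting it. -/
theorem galvin_two_points [TopologicalSpace α] {P : Set α} (hP : Perfect P) {O : Set α}
    (hO : IsOpen O) {x : α} (hx : x ∈ O ∩ P) : ∃ y ∈ O ∩ P, y ≠ x := by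
  have hacc : AccPt x (𝓟 P) := hP.acc x hx.2
  haveI : Filter.NeBot (𝓝[≠] x ⊓ 𝓟 P) := hacc
  have hmem : (O ∩ {x}ᶜ) ∩ P ∈ 𝓝[≠] x ⊓ 𝓟 P := by
    refine Filter.inter_mem (Filter.mem_inf_of_left ?_) (Filter.mem_inf_of_right ?_)
    · exact Filter.inter_mem (mem_nhdsWithin_of_mem_nhds (hO.mem_nhds hx.1))
        self_mem_nhdsWithin
    · exact Filter.mem_principal_self P
  obtain ⟨y, ⟨⟨hyO, hyne⟩, hyP⟩⟩ := Filter.nonempty_of_mem hmem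
  exact ⟨y, ⟨hyO, hyP⟩, hyne⟩

variable [MetricSpace α]

/-- Shrink two points in open sets to small disjoint balls with good closure properties. -/
theorem galvin_balls {A B : Set α} (hA : IsOpen A) (hB : IsOpen B) {p q : α}
    (hp : p ∈ A) (hq : q ∈ B) (hpq : p ≠ q) (ε : ℝ) (hε : 0 < ε) :
    ∃ δ : ℝ, 0 < δ ∧ Metric.ball p δ ⊆ A ∧ Metric.ball q δ ⊆ B ∧
      closure (Metric.ball p δ) ⊆ A ∧ closure (Metric.ball q δ) ⊆ B ∧
      Disjoint (Metric.ball p δ) (Metric.ball q δ) ∧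
      EMetric.diam (Metric.ball p δ) ≤ ENNReal.ofReal ε ∧
      EMetric.diam (Metric.ball q δ) ≤ ENNReal.ofReal ε := by
  obtain ⟨r₁, hr₁, hball₁⟩ := Metric.isOpen_iff.mp hA p hp
  obtain ⟨r₂, hr₂, hball₂⟩ := Metric.isOpen_iff.mp hB q hq
  have hd : 0 < dist p q := dist_pos.mpr hpq
  set δ : ℝ := min (min (r₁ / 2) (r₂ / 2)) (min (ε / 4) (dist p q / 3)) with hδdef
  have hδpos : 0 < δ := by positivity
  have hδr₁ : δ < r₁ := by
    have : δ ≤ r₁ / 2 := le_trans (min_le_left _ _) (min_le_left _ _)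
    linarith
  have hδr₂ : δ < r₂ := by
    have : δ ≤ r₂ / 2 := le_trans (min_le_left _ _) (min_le_right _ _)
    linarith
  have hδε : δ ≤ ε / 4 := le_trans (min_le_right _ _) (min_le_left _ _)
  have hδd : δ ≤ dist p q / 3 := le_trans (min_le_right _ _) (min_le_right _ _)
  have hsub₁ : Metric.ball p δ ⊆ A := fun z hz =>
    hball₁ (mem_ball.mpr (lt_of_lt_of_le (mem_ball.mp hz) hδr₁.le))
  have hsub₂ : Metric.ball q δ ⊆ B := fun z hz =>
    hball₂ (mem_ball.mpr (lt_of_lt_of_le (mem_ball.mp hz) hδr₂.le))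
  have hcl₁ : closure (Metric.ball p δ) ⊆ A :=
    (Metric.closure_ball_subset_closedBall.trans (Metric.closedBall_subset_ball hδr₁)).trans hball₁
  have hcl₂ : closure (Metric.ball q δ) ⊆ B :=
    (Metric.closure_ball_subset_closedBall.trans (Metric.closedBall_subset_ball hδr₂)).trans hball₂
  have hdisj : Disjoint (Metric.ball p δ) (Metric.ball q δ) := by
    rw [Set.disjoint_left]
    intro z hzp hzq
    have h1 : dist z p < δ := mem_ball.mp hzp
    have h2 : dist z q < δ := mem_ball.mp hzq
    have := dist_triangle p z q
    rw [dist_comm z p] at h1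
    linarith
  have hdiam : ∀ x : α, EMetric.diam (Metric.ball x δ) ≤ ENNReal.ofReal ε := by
    intro x
    apply EMetric.diam_le
    intro a ha b hb
    rw [edist_dist]
    apply ENNReal.ofReal_le_ofReal
    have h1 : dist a x < δ := mem_ball.mp ha
    have h2 : dist b x < δ := mem_ball.mp hb
    have := dist_triangle a x b
    rw [dist_comm x b] at this
    linarith
  exact ⟨δ, hδpos, hsub₁, hsub₂, hcl₁, hcl₂, hdisj, hdiam p, hdiam q⟩

/-- The fusion lemma: build a Cantor set inside `P` from a splitting procedure that
maintains a hereditary symmetric relation `R` between pieces. -/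
theorem galvin_fusion [CompleteSpace α] (P : Set α) (hP : IsClosed P)
    (R : Set α → Set α → Prop)
    (Rsymm : ∀ U V, R U V → R V U)
    (Rmono : ∀ U U' V V' : Set α, U' ⊆ U → V' ⊆ V → R U V → R U' V')
    (O₀ : Set α) (hO₀ : IsOpen O₀) (hO₀P : (O₀ ∩ P).Nonempty)
    (split : ∀ O : Set α, IsOpen O → O ⊆ O₀ → (O ∩ P).Nonempty → ∀ ε : ℝ, 0 < ε →
      ∃ O₁ O₂ : Set α, IsOpen O₁ ∧ IsOpen O₂ ∧ (O₁ ∩ P).Nonempty ∧ (O₂ ∩ P).Nonempty ∧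
        closure O₁ ⊆ O ∧ closure O₂ ⊆ O ∧ Disjoint O₁ O₂ ∧
        EMetric.diam O₁ ≤ ENNReal.ofReal ε ∧ EMetric.diam O₂ ≤ ENNReal.ofReal ε ∧ R O₁ O₂) :
    ∃ f : (ℕ → Bool) → α, range f ⊆ P ∧ Continuous f ∧ Function.Injective f ∧
      ∀ a b : ℕ → Bool, a ≠ b → ∃ U V : Set α, R U V ∧ f a ∈ U ∧ f b ∈ V := by
  classical
  choose g₁ g₂ ho₁ ho₂ hn₁ hn₂ hc₁ hc₂ hdj hd₁ hd₂ hr using split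
  have eps_pos : ∀ n : ℕ, (0 : ℝ) < (1 / 2) ^ n := fun n => by positivity
  -- the nodes of the scheme
  let Node := {q : Set α // (IsOpen q ∧ q ⊆ O₀) ∧ (q ∩ P).Nonempty}
  let N : List Bool → Node := fun l =>
    l.rec ⟨O₀, ⟨hO₀, Set.Subset.rfl⟩, hO₀P⟩
      (fun b l ih =>
        cond b
          ⟨g₁ ih.1 ih.2.1.1 ih.2.1.2 ih.2.2 ((1 / 2) ^ (l.length + 1)) (eps_pos _),
            ⟨ho₁ _ _ _ _ _ _,
              (subset_closure.trans (hc₁ ih.1 ih.2.1.1 ih.2.1.2 ih.2.2 _ _)).trans ih.2.1.2⟩,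
            hn₁ _ _ _ _ _ _⟩
          ⟨g₂ ih.1 ih.2.1.1 ih.2.1.2 ih.2.2 ((1 / 2) ^ (l.length + 1)) (eps_pos _),
            ⟨ho₂ _ _ _ _ _ _,
              (subset_closure.trans (hc₂ ih.1 ih.2.1.1 ih.2.1.2 ih.2.2 _ _)).trans ih.2.1.2⟩,
            hn₂ _ _ _ _ _ _⟩)
  have hchild : ∀ (l : List Bool) (b : Bool),
      closure (N (b :: l)).1 ⊆ (N l).1 ∧
      EMetric.diam (N (b :: l)).1 ≤ ENNReal.ofReal ((1 / 2) ^ (l.length + 1)) := by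
    intro l b
    cases b
    · exact ⟨hc₂ _ _ _ _ _ _, hd₂ _ _ _ _ _ _⟩
    · exact ⟨hc₁ _ _ _ _ _ _, hd₁ _ _ _ _ _ _⟩
  have hsib : ∀ l : List Bool,
      Disjoint (N (true :: l)).1 (N (false :: l)).1 ∧ R (N (true :: l)).1 (N (false :: l)).1 :=
    fun l => ⟨hdj _ _ _ _ _ _, hr _ _ _ _ _ _⟩
  have hsubset : ∀ (l : List Bool) (b : Bool), (N (b :: l)).1 ⊆ (N l).1 := fun l b =>
    subset_closure.trans (hchild l b).1
  -- same-length distinct nodes are `R`-related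
  have hlevel : ∀ s t : List Bool, s.length = t.length → s ≠ t → R (N s).1 (N t).1 := by
    intro s
    induction s with
    | nil =>
      intro t hlen hne
      cases t with
      | nil => exact absurd rfl hne
      | cons c t' => simp at hlen
    | cons b s ih =>
      intro t hlen hne
      cases t with
      | nil => simp at hlen
      | cons c t' =>
        have hlen' : s.length = t'.length := by simpa using hlen
        by_cases hst : s = t'
        · subst hst
          cases b <;> cases c
          · exact absurd rfl hne
          · exact Rsymm _ _ (hsib s).2
          · exact (hsib s).2
          · exact absurd rfl hne
        · exact Rmono _ _ _ _ (hsubset s b) (hsubset t' c) (ih t' hlen' hst)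
  -- the scheme
  let A : List Bool → Set α := fun l => (N l).1 ∩ P
  have hA_ca : ClosureAntitone A := by
    intro l b
    refine subset_trans (closure_inter_subset_inter_closure _ _) ?_
    rw [hP.closure_eq]
    exact Set.inter_subset_inter_left _ (hchild l b).1
  have hA_ne : ∀ l, (A l).Nonempty := fun l => (N l).2.2
  have hA_dj : CantorScheme.Disjoint A := by
    intro l a b hab
    cases a <;> cases b
    · exact absurd rfl hab
    · exact ((hsib l).1.mono Set.inter_subset_left Set.inter_subset_left).symm
    · exact (hsib l).1.mono Set.inter_subset_left Set.inter_subset_left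
    · exact absurd rfl hab
  have hA_vd : VanishingDiam A := by
    intro x
    have htend0 : Tendsto (fun n : ℕ => ((1 : ℝ) / 2) ^ n) atTop (𝓝 0) :=
      tendsto_pow_atTop_nhds_zero_of_lt_one (by norm_num) (by norm_num)
    have htend : Tendsto (fun n : ℕ => ENNReal.ofReal ((1 / 2) ^ n)) atTop (𝓝 0) := by
      have := ENNReal.tendsto_ofReal htend0
      simpa using this
    apply tendsto_of_tendsto_of_tendsto_of_le_of_le' tendsto_const_nhds htend
    · filter_upwards with n using zero_le
    · rw [eventually_atTop]
      refine ⟨1, fun m hm => ?_⟩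
      rcases Nat.exists_eq_succ_of_ne_zero (Nat.one_le_iff_ne_zero.mp hm) with ⟨n, rfl⟩
      have h1 : A (res x (n + 1)) ⊆ (N (res x (n + 1))).1 := Set.inter_subset_left
      refine le_trans (EMetric.diam_mono h1) ?_
      rw [res_succ]
      have := (hchild (res x n) (x n)).2
      rwa [res_length] at this
  have hdom : ∀ {x : ℕ → Bool}, x ∈ (inducedMap A).1 := fun {x} => by
    rw [hA_ca.map_of_vanishingDiam hA_vd hA_ne]
    exact Set.mem_univ _
  refine ⟨fun x => (inducedMap A).2 ⟨x, hdom⟩, ?_, ?_, ?_, ?_⟩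
  · rintro y ⟨x, rfl⟩
    exact (map_mem ⟨x, hdom⟩ 0).2
  · exact hA_vd.map_continuous.comp (by continuity)
  · intro x y hxy
    simpa only [← Subtype.val_inj] using hA_dj.map_injective hxy
  · intro a b hab
    obtain ⟨n, hn⟩ := Function.ne_iff.mp hab
    have hres : res a (n + 1) ≠ res b (n + 1) := by
      intro hcon
      rw [res_succ, res_succ] at hcon
      exact hn (List.head_eq_of_cons_eq hcon)
    refine ⟨(N (res a (n + 1))).1, (N (res b (n + 1))).1,
      hlevel _ _ (by simp [res_length]) hres, ?_, ?_⟩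
    · exact (map_mem ⟨a, hdom⟩ (n + 1)).1
    · exact (map_mem ⟨b, hdom⟩ (n + 1)).1

end Aux

/-- Packaging: the range of a continuous injection from Cantor space is a nonempty
perfect compact set homeomorphic to Cantor space. -/
theorem galvin_pack {α : Type*} [TopologicalSpace α] [T2Space α] (f : (ℕ → Bool) → α)
    (hc : Continuous f) (hi : Function.Injective f) :
    (Set.range f).Nonempty ∧ IsCompact (Set.range f) ∧ Perfect (Set.range f) ∧
      Nonempty (Set.range f ≃ₜ (ℕ → Bool)) := by
  have hcomp : IsCompact (Set.range f) := isCompact_range hc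
  refine ⟨⟨f (fun _ => false), Set.mem_range_self _⟩, hcomp, ?_, ?_⟩
  · refine ⟨hcomp.isClosed, ?_⟩
    rintro x ⟨a, rfl⟩
    rw [accPt_iff_frequently]
    set u : ℕ → α := fun n => f (Function.update a n (!(a n))) with hu
    have h1 : ∀ n, u n ≠ f a ∧ u n ∈ Set.range f := by
      intro n
      refine ⟨fun hcon => ?_, Set.mem_range_self _⟩
      have := hi hcon
      have h2 : Function.update a n (!(a n)) n = a n := by rw [this]
      rw [Function.update_self] at h2
      exact (Bool.not_ne_self (a n)) h2
    have h3 : Tendsto (fun n => Function.update a n (!(a n))) atTop (𝓝 a) := by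
      rw [tendsto_pi_nhds]
      intro k
      apply Tendsto.congr' _ tendsto_const_nhds
      rw [Filter.EventuallyEq, eventually_atTop]
      exact ⟨k + 1, fun n hn => (Function.update_of_ne (by omega : k ≠ n) _ _).symm⟩
    have h2 : Tendsto u atTop (𝓝 (f a)) := (hc.tendsto a).comp h3
    exact h2.frequently (Filter.Frequently.of_forall h1)
  · let e : (ℕ → Bool) ≃ Set.range f := Equiv.ofInjective f hi
    have hval : Subtype.val ∘ ⇑e = f := funext fun x => by
      simp [e, Equiv.ofInjective_apply]
    have hce : Continuous e := continuous_induced_rng.mpr (by rw [hval]; exact hc)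
    exact ⟨(hce.homeoOfEquivCompactToT2).symm⟩

/-- Main induction: Galvin's theorem over a perfect set, by induction on the number of colors. -/
theorem galvin_key {α : Type*} [MetricSpace α] [CompleteSpace α] :
    ∀ (ℓ : ℕ) (W : Fin ℓ → Set (α × α)),
      (∀ i, W i ⊆ {p : α × α | p.1 ≠ p.2}) →
      (∀ i, IsOpen (W i)) →
      (∀ i, ∀ x y : α, (x, y) ∈ W i → (y, x) ∈ W i) →
      ∀ P : Set α, Perfect P → P.Nonempty →
        (∀ x ∈ P, ∀ y ∈ P, x ≠ y → ∃ i, (x, y) ∈ W i) →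
        ∃ T : Set α, T.Nonempty ∧ IsCompact T ∧ Perfect T ∧
          Nonempty (T ≃ₜ (ℕ → Bool)) ∧
          ∃ i, ∀ x ∈ T, ∀ y ∈ T, x ≠ y → (x, y) ∈ W i := by
  intro ℓ
  induction ℓ with
  | zero =>
    intro W hWsub hWopen hWsymm P hP hPne hcov
    obtain ⟨x, hx⟩ := hPne
    obtain ⟨y, hy, hyx⟩ := galvin_two_points hP isOpen_univ (x := x) ⟨Set.mem_univ x, hx⟩
    obtain ⟨i, -⟩ := hcov y hy.2 x hx hyx
    exact absurd i.2 (by omega)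
  | succ n IH =>
    intro W hWsub hWopen hWsymm P hP hPne hcov
    set Wt : Set (α × α) := W (Fin.last n) with hWt
    by_cases hD : ∃ O : Set α, IsOpen O ∧ (O ∩ P).Nonempty ∧
        ∀ O' : Set α, IsOpen O' → O' ⊆ O → (O' ∩ P).Nonempty →
          ∃ p ∈ O' ∩ P, ∃ q ∈ O' ∩ P, (p, q) ∈ Wt
    · -- density case: build a Cantor set with all pairs in the last color
      obtain ⟨O, hOopen, hOP, hdense⟩ := hD
      have hsplit : ∀ O' : Set α, IsOpen O' → O' ⊆ O → (O' ∩ P).Nonempty → ∀ ε : ℝ, 0 < ε →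
          ∃ O₁ O₂ : Set α, IsOpen O₁ ∧ IsOpen O₂ ∧ (O₁ ∩ P).Nonempty ∧ (O₂ ∩ P).Nonempty ∧
            closure O₁ ⊆ O' ∧ closure O₂ ⊆ O' ∧ Disjoint O₁ O₂ ∧
            EMetric.diam O₁ ≤ ENNReal.ofReal ε ∧ EMetric.diam O₂ ≤ ENNReal.ofReal ε ∧
            (∀ x ∈ O₁, ∀ y ∈ O₂, (x, y) ∈ Wt) := by
        intro O' hO' hO'sub hO'ne ε hε
        obtain ⟨p, hp, q, hq, hpq⟩ := hdense O' hO' hO'sub hO'ne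
        have hpqne : p ≠ q := hWsub _ hpq
        obtain ⟨u, v, hu, hv, hpu, hqv, huv⟩ := isOpen_prod_iff.mp (hWopen (Fin.last n)) p q hpq
        obtain ⟨δ, hδpos, hsub₁, hsub₂, hcl₁, hcl₂, hdisj, hdiam₁, hdiam₂⟩ :=
          galvin_balls (hu.inter hO') (hv.inter hO') ⟨hpu, hp.1⟩ ⟨hqv, hq.1⟩ hpqne ε hε
        refine ⟨Metric.ball p δ, Metric.ball q δ, Metric.isOpen_ball, Metric.isOpen_ball,
          ⟨p, Metric.mem_ball_self hδpos, hp.2⟩, ⟨q, Metric.mem_ball_self hδpos, hq.2⟩,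
          hcl₁.trans Set.inter_subset_right, hcl₂.trans Set.inter_subset_right,
          hdisj, hdiam₁, hdiam₂, ?_⟩
        intro x hx y hy
        exact huv (Set.mk_mem_prod ((hsub₁ hx).1) ((hsub₂ hy).1))
      obtain ⟨f, hfP, hfc, hfi, hfpair⟩ := galvin_fusion P hP.closed
        (fun U V => ∀ x ∈ U, ∀ y ∈ V, (x, y) ∈ Wt)
        (fun U V h x hx y hy => hWsymm _ _ _ (h y hy x hx))
        (fun U U' V V' hU hV h x hx y hy => h x (hU hx) y (hV hy))
        O hOopen hOP hsplit
      obtain ⟨hTne, hTcomp, hTperf, hThomeo⟩ := galvin_pack f hfc hfi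
      refine ⟨Set.range f, hTne, hTcomp, hTperf, hThomeo, Fin.last n, ?_⟩
      rintro x ⟨a, rfl⟩ y ⟨b, rfl⟩ hxy
      obtain ⟨U, V, hR, haU, hbV⟩ := hfpair a b (fun hcon => hxy (by rw [hcon]))
      exact hR _ haU _ hbV
    · -- avoidance case: build a perfect set avoiding the last color and recurse
      push_neg at hD
      have hsplit : ∀ O : Set α, IsOpen O → O ⊆ (Set.univ : Set α) → (O ∩ P).Nonempty →
          ∀ ε : ℝ, 0 < ε →
          ∃ O₁ O₂ : Set α, IsOpen O₁ ∧ IsOpen O₂ ∧ (O₁ ∩ P).Nonempty ∧ (O₂ ∩ P).Nonempty ∧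
            closure O₁ ⊆ O ∧ closure O₂ ⊆ O ∧ Disjoint O₁ O₂ ∧
            EMetric.diam O₁ ≤ ENNReal.ofReal ε ∧ EMetric.diam O₂ ≤ ENNReal.ofReal ε ∧
            (∀ x ∈ O₁ ∩ P, ∀ y ∈ O₂ ∩ P, (x, y) ∉ Wt) := by
        intro O hO _ hOne ε hε
        obtain ⟨O', hO', hO'sub, hO'ne, havoid⟩ := hD O hO hOne
        obtain ⟨p, hp⟩ := hO'ne
        obtain ⟨q, hq, hqp⟩ := galvin_two_points hP hO' hp
        obtain ⟨δ, hδpos, hsub₁, hsub₂, hcl₁, hcl₂, hdisj, hdiam₁, hdiam₂⟩ :=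
          galvin_balls hO' hO' hp.1 hq.1 hqp.symm ε hε
        refine ⟨Metric.ball p δ, Metric.ball q δ, Metric.isOpen_ball, Metric.isOpen_ball,
          ⟨p, Metric.mem_ball_self hδpos, hp.2⟩, ⟨q, Metric.mem_ball_self hδpos, hq.2⟩,
          hcl₁.trans hO'sub, hcl₂.trans hO'sub, hdisj, hdiam₁, hdiam₂, ?_⟩
        intro x hx y hy
        exact havoid x ⟨hsub₁ hx.1, hx.2⟩ y ⟨hsub₂ hy.1, hy.2⟩
      obtain ⟨f, hfP, hfc, hfi, hfpair⟩ := galvin_fusion P hP.closed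
        (fun U V => ∀ x ∈ U ∩ P, ∀ y ∈ V ∩ P, (x, y) ∉ Wt)
        (fun U V h x hx y hy hcon => h y hy x hx (hWsymm _ _ _ hcon))
        (fun U U' V V' hU hV h x hx y hy => h x ⟨hU hx.1, hx.2⟩ y ⟨hV hy.1, hy.2⟩)
        Set.univ isOpen_univ (by simpa using hPne) hsplit
      obtain ⟨hQne, hQcomp, hQperf, -⟩ := galvin_pack f hfc hfi
      -- the new perfect set avoids the last color
      have hQavoid : ∀ x ∈ Set.range f, ∀ y ∈ Set.range f, x ≠ y → (x, y) ∉ Wt := by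
        rintro x ⟨a, rfl⟩ y ⟨b, rfl⟩ hxy
        obtain ⟨U, V, hR, haU, hbV⟩ := hfpair a b (fun hcon => hxy (by rw [hcon]))
        exact hR _ ⟨haU, hfP (Set.mem_range_self a)⟩ _ ⟨hbV, hfP (Set.mem_range_self b)⟩
      have hcov' : ∀ x ∈ Set.range f, ∀ y ∈ Set.range f, x ≠ y →
          ∃ j : Fin n, (x, y) ∈ W j.castSucc := by
        intro x hx y hy hxy
        obtain ⟨j, hj⟩ := hcov x (hfP hx) y (hfP hy) hxy
        have hjne : j ≠ Fin.last n := by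
          rintro rfl
          exact hQavoid x hx y hy hxy hj
        obtain ⟨j', hj'⟩ := Fin.eq_castSucc_of_ne_last hjne
        exact ⟨j', by rwa [hj']⟩
      obtain ⟨T, hTne, hTcomp, hTperf, hThomeo, i, hi⟩ :=
        IH (fun j => W j.castSucc) (fun j => hWsub _) (fun j => hWopen _)
          (fun j => hWsymm _) (Set.range f) hQperf hQne hcov'
      exact ⟨T, hTne, hTcomp, hTperf, hThomeo, i.castSucc, hi⟩

theorem stmt_7 (E : Type*) [TopologicalSpace E] [PolishSpace E]
    (hE : ¬ (Set.univ : Set E).Countable)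
    (ℓ : ℕ) (W : Fin ℓ → Set (E × E))
    (hWsub : ∀ i, W i ⊆ {p : E × E | p.1 ≠ p.2})
    (hWopen : ∀ i, IsOpen (W i))
    (hWsymm : ∀ i, ∀ x y : E, (x, y) ∈ W i → (y, x) ∈ W i)
    (hcover : {p : E × E | p.1 ≠ p.2} ⊆ ⋃ i, W i) :
    ∃ T : Set E, T.Nonempty ∧ IsCompact T ∧ Perfect T ∧
      Nonempty (T ≃ₜ (ℕ → Bool)) ∧
      ∃ i : Fin ℓ, ∀ x ∈ T, ∀ y ∈ T, x ≠ y → (x, y) ∈ W i := by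
  letI := TopologicalSpace.upgradeIsCompletelyMetrizable E
  obtain ⟨P, hP, hPne, -⟩ :=
    exists_perfect_nonempty_of_isClosed_of_not_countable isClosed_univ hE
  exact galvin_key ℓ W hWsub hWopen hWsymm P hP hPne
    (fun x _ y _ hxy => Set.mem_iUnion.mp (hcover hxy))
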